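/- arXiv:math/0402357 — 4 statements merged into one kernel-verified Lean document; each statement's English description precedes it below -/
import Mathlib

section
/- Euler–Lagrange necessary condition: if f(x,y,p) is C², y : [a,b] → ℝ is C² and minimizes I[y] = ∫_a^b f(x, y(x), y'(x)) dx among all C² functions with the same endpoint values y(a), y(b), then ∂f/∂y (x, y(x), y'(x)) − d/dx [∂f/∂p (x, y(x), y'(x))] = 0 for all x in [a,b]. -/
open MeasureTheory Set intervalIntegral Metric

namespace EulerLagrangeAux

/-- Uncurried version of the Lagrangian. -/
noncomputable def Fu (f : ℝ → ℝ → ℝ → ℝ) : ℝ × ℝ × ℝ → ℝ := fun q => f q.1 q.2.1 q.2.2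

/-- Partial derivative of the Lagrangian in the second variable. -/
noncomputable def Fy (f : ℝ → ℝ → ℝ → ℝ) (q : ℝ × ℝ × ℝ) : ℝ := fderiv ℝ (Fu f) q (0, 1, 0)

/-- Partial derivative of the Lagrangian in the third variable. -/
noncomputable def Fp (f : ℝ → ℝ → ℝ → ℝ) (q : ℝ × ℝ × ℝ) : ℝ := fderiv ℝ (Fu f) q (0, 0, 1)

variable {f : ℝ → ℝ → ℝ → ℝ}

lemma contDiff_Fy (hf : ContDiff ℝ 2 (Fu f)) : ContDiff ℝ 1 (Fy f) :=
  (hf.fderiv_right (m := 1) (by norm_num)).clm_apply contDiff_const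

lemma contDiff_Fp (hf : ContDiff ℝ 2 (Fu f)) : ContDiff ℝ 1 (Fp f) :=
  (hf.fderiv_right (m := 1) (by norm_num)).clm_apply contDiff_const

lemma hasDerivAt_affine (c d ε : ℝ) : HasDerivAt (fun ε : ℝ => c + ε * d) d ε := by
  simpa using ((hasDerivAt_id ε).mul_const d).const_add c

lemma deriv_contDiff {y : ℝ → ℝ} (hy : ContDiff ℝ 2 y) : ContDiff ℝ 1 (deriv y) := by
  have h : ContDiff ℝ ((1 : WithTop ℕ∞) + 1) y := by
    have : ((1 : WithTop ℕ∞) + 1) = 2 := by norm_num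
    rw [this]; exact hy
  exact (contDiff_succ_iff_deriv.mp h).2.2

lemma hasDerivAt_Fy (hf : ContDiff ℝ 2 (Fu f)) (x s₀ p : ℝ) :
    HasDerivAt (fun s => f x s p) (Fy f (x, s₀, p)) s₀ := by
  have hcurve : HasDerivAt (fun s : ℝ => ((x, s, p) : ℝ × ℝ × ℝ)) (0, 1, 0) s₀ :=
    (hasDerivAt_const s₀ x).prodMk ((hasDerivAt_id s₀).prodMk (hasDerivAt_const s₀ p))
  exact ((hf.differentiable (by norm_num)).differentiableAt.hasFDerivAt).comp_hasDerivAt s₀ hcurve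

lemma hasDerivAt_Fp (hf : ContDiff ℝ 2 (Fu f)) (x s p₀ : ℝ) :
    HasDerivAt (fun p => f x s p) (Fp f (x, s, p₀)) p₀ := by
  have hcurve : HasDerivAt (fun p : ℝ => ((x, s, p) : ℝ × ℝ × ℝ)) (0, 0, 1) p₀ :=
    (hasDerivAt_const p₀ x).prodMk ((hasDerivAt_const p₀ s).prodMk (hasDerivAt_id p₀))
  exact ((hf.differentiable (by norm_num)).differentiableAt.hasFDerivAt).comp_hasDerivAt p₀ hcurve

/-- The fundamental lemma of the calculus of variations, positive case. -/
lemma fund_pos {E : ℝ → ℝ} (hE : Continuous E) {a b : ℝ} (hab : a < b)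
    (h : ∀ η : ℝ → ℝ, ContDiff ℝ 2 η → η a = 0 → η b = 0 →
      (∫ x in a..b, η x * E x) = 0)
    {x₀ : ℝ} (hx₀ : x₀ ∈ Icc a b) (hpos : 0 < E x₀) : False := by
  obtain ⟨δ, hδ, hball⟩ : ∃ δ > 0, ∀ x ∈ ball x₀ δ, 0 < E x := by
    have hmem : x₀ ∈ {x | 0 < E x} := hpos
    have := (isOpen_lt continuous_const hE).mem_nhds hmem
    rcases Metric.mem_nhds_iff.mp this with ⟨δ, hδ, hsub⟩
    exact ⟨δ, hδ, fun x hx => hsub hx⟩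
  obtain ⟨hx1, hx2⟩ := hx₀
  set α := max a (x₀ - δ/2) with hα
  set β := min b (x₀ + δ/2) with hβ
  have haα : a ≤ α := le_max_left _ _
  have hβb : β ≤ b := min_le_left _ _
  have hαx : x₀ - δ/2 ≤ α := le_max_right _ _
  have hxβ : β ≤ x₀ + δ/2 := min_le_right _ _
  have hαβ : α < β := by
    rw [hα, hβ, lt_min_iff, max_lt_iff, max_lt_iff]
    refine ⟨⟨hab, by linarith⟩, by linarith, by linarith⟩
  have hsub : Icc α β ⊆ ball x₀ δ := by
    rintro x ⟨h1, h2⟩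
    have h3 : x₀ - δ/2 ≤ x := le_trans hαx h1
    have h4 : x ≤ x₀ + δ/2 := le_trans h2 hxβ
    rw [mem_ball, Real.dist_eq, abs_lt]
    constructor <;> linarith
  set c := (α + β)/2 with hc
  set r := (β - α)/2 with hr
  have hr0 : 0 < r := by rw [hr]; linarith
  have hcr1 : c - r = α := by rw [hc, hr]; ring
  have hcr2 : c + r = β := by rw [hc, hr]; ring
  let bump : ContDiffBump c := ⟨r/2, r, by linarith, by linarith⟩
  set η : ℝ → ℝ := fun x => bump x with hηdef
  have hη : ContDiff ℝ 2 η := by exact_mod_cast bump.contDiff (n := 2)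
  have hzero : ∀ x : ℝ, x ∉ Ioo α β → η x = 0 := by
    intro x hx
    apply bump.zero_of_le_dist
    rw [Real.dist_eq, le_abs]
    rw [Set.mem_Ioo, not_and_or, not_lt, not_lt] at hx
    rcases hx with h' | h'
    · right; linarith
    · left; linarith
  have hηa : η a = 0 := hzero a (by rintro ⟨h1, _⟩; exact absurd h1 (not_lt.mpr haα))
  have hηb : η b = 0 := hzero b (by rintro ⟨_, h2⟩; exact absurd h2 (not_lt.mpr hβb))
  have h0 := h η hη hηa hηb
  have hcont : Continuous fun x => η x * E x := hη.continuous.mul hE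
  have i1 : IntervalIntegrable (fun x => η x * E x) volume a α :=
    hcont.intervalIntegrable _ _
  have i2 : IntervalIntegrable (fun x => η x * E x) volume α β :=
    hcont.intervalIntegrable _ _
  have i3 : IntervalIntegrable (fun x => η x * E x) volume β b :=
    hcont.intervalIntegrable _ _
  have hsplit : (∫ x in a..α, η x * E x) + (∫ x in α..β, η x * E x)
      + (∫ x in β..b, η x * E x) = ∫ x in a..b, η x * E x := by
    rw [integral_add_adjacent_intervals i1 i2, integral_add_adjacent_intervals (i1.trans i2) i3]
  have z1 : (∫ x in a..α, η x * E x) = 0 := by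
    have : EqOn (fun x => η x * E x) (fun _ => 0) (uIcc a α) := by
      intro x hx
      rw [uIcc_of_le haα] at hx
      have : η x = 0 := hzero x (by rintro ⟨h1, _⟩; exact absurd hx.2 (not_le.mpr h1))
      simp [this]
    rw [intervalIntegral.integral_congr this, intervalIntegral.integral_const]
    simp
  have z3 : (∫ x in β..b, η x * E x) = 0 := by
    have : EqOn (fun x => η x * E x) (fun _ => 0) (uIcc β b) := by
      intro x hx
      rw [uIcc_of_le hβb] at hx
      have : η x = 0 := hzero x (by rintro ⟨_, h2⟩; exact absurd hx.1 (not_le.mpr h2))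
      simp [this]
    rw [intervalIntegral.integral_congr this, intervalIntegral.integral_const]
    simp
  have zmid : 0 < ∫ x in α..β, η x * E x := by
    apply intervalIntegral_pos_of_pos_on i2 _ hαβ
    intro x hx
    have hxball : x ∈ ball c r := by
      rw [Real.ball_eq_Ioo, hcr1, hcr2]; exact hx
    have hη_pos : 0 < η x := bump.pos_of_mem_ball hxball
    have hE_pos : 0 < E x := hball x (hsub (Ioo_subset_Icc_self hx))
    exact mul_pos hη_pos hE_pos
  linarith [hsplit, z1, z3, zmid, h0]

/-- The fundamental lemma of the calculus of variations. -/
lemma fundamental {E : ℝ → ℝ} (hE : Continuous E) {a b : ℝ} (hab : a < b)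
    (h : ∀ η : ℝ → ℝ, ContDiff ℝ 2 η → η a = 0 → η b = 0 →
      (∫ x in a..b, η x * E x) = 0) :
    ∀ x₀ ∈ Icc a b, E x₀ = 0 := by
  intro x₀ hx₀
  by_contra hne
  rcases lt_or_gt_of_ne hne with hlt | hgt
  · refine fund_pos (E := fun x => -E x) hE.neg hab ?_ hx₀ (by simpa using hlt)
    intro η hη ha hb
    have := h η hη ha hb
    simp only [mul_neg]
    rw [intervalIntegral.integral_neg, this, neg_zero]
  · exact fund_pos hE hab h hx₀ hgt

/-- The first variation of the functional vanishes at a minimizer. -/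
lemma first_variation (f : ℝ → ℝ → ℝ → ℝ) (hf : ContDiff ℝ 2 (Fu f))
    (a b : ℝ) (hab : a < b) (y : ℝ → ℝ) (hy : ContDiff ℝ 2 y)
    (hmin : ∀ u : ℝ → ℝ, ContDiff ℝ 2 u → u a = y a → u b = y b →
      (∫ x in a..b, f x (y x) (deriv y x)) ≤ ∫ x in a..b, f x (u x) (deriv u x))
    (η : ℝ → ℝ) (hη : ContDiff ℝ 2 η) (hηa : η a = 0) (hηb : η b = 0) :
    (∫ x in a..b, (η x * Fy f (x, y x, deriv y x)
       + deriv η x * Fp f (x, y x, deriv y x))) = 0 := by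
  have hy1 : ContDiff ℝ 1 y := hy.of_le one_le_two
  have hyd : ContDiff ℝ 1 (deriv y) := deriv_contDiff hy
  have hη1 : ContDiff ℝ 1 η := hη.of_le one_le_two
  have hηd : ContDiff ℝ 1 (deriv η) := deriv_contDiff hη
  set Q : ℝ → ℝ → ℝ × ℝ × ℝ :=
    fun ε x => (x, y x + ε * η x, deriv y x + ε * deriv η x) with hQ
  have hQc : Continuous fun p : ℝ × ℝ => Q p.1 p.2 := by
    refine continuous_snd.prodMk (Continuous.prodMk ?_ ?_)
    · exact (hy1.continuous.comp continuous_snd).add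
        (continuous_fst.mul (hη1.continuous.comp continuous_snd))
    · exact (hyd.continuous.comp continuous_snd).add
        (continuous_fst.mul (hηd.continuous.comp continuous_snd))
  set DF : ℝ → ℝ → ℝ := fun ε x => fderiv ℝ (Fu f) (Q ε x) (0, η x, deriv η x) with hDF
  have hDFc : Continuous fun p : ℝ × ℝ => DF p.1 p.2 := by
    refine Continuous.clm_apply ?_ ?_
    · exact ((hf.fderiv_right (m := 1) (by norm_num)).continuous).comp hQc
    · exact continuous_const.prodMk ((hη1.continuous.comp continuous_snd).prodMk
        (hηd.continuous.comp continuous_snd))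
  have hK : IsCompact (Icc (-1 : ℝ) 1 ×ˢ Icc a b) := isCompact_Icc.prod isCompact_Icc
  obtain ⟨C, hC⟩ := hK.exists_bound_of_continuousOn hDFc.continuousOn
  have hmeas : ∀ᶠ ε in nhds (0 : ℝ),
      AEStronglyMeasurable (fun x => Fu f (Q ε x)) (volume.restrict (Set.uIoc a b)) :=
    Filter.Eventually.of_forall fun ε =>
      ((hf.continuous.comp (hQc.comp (Continuous.prodMk_right ε)))).aestronglyMeasurable
  have hint : IntervalIntegrable (fun x => Fu f (Q 0 x)) volume a b :=
    (hf.continuous.comp (hQc.comp (Continuous.prodMk_right 0))).intervalIntegrable a b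
  have hmeas' : AEStronglyMeasurable (DF 0) (volume.restrict (Set.uIoc a b)) :=
    (hDFc.comp (Continuous.prodMk_right 0)).aestronglyMeasurable
  have hbound : ∀ᵐ x ∂(volume : Measure ℝ), x ∈ Set.uIoc a b →
      ∀ ε ∈ ball (0 : ℝ) 1, ‖DF ε x‖ ≤ C := by
    refine Filter.Eventually.of_forall (fun x hx ε hε => ?_)
    have hx' : x ∈ Icc a b := by
      rw [uIoc_of_le hab.le] at hx; exact Ioc_subset_Icc_self hx
    have hε' : ε ∈ Icc (-1 : ℝ) 1 := by
      rw [mem_ball, Real.dist_eq, sub_zero] at hε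
      exact ⟨(abs_lt.mp hε).1.le, (abs_lt.mp hε).2.le⟩
    exact hC (ε, x) ⟨hε', hx'⟩
  have hbint : IntervalIntegrable (fun _ : ℝ => C) volume a b := intervalIntegrable_const
  have hdiff : ∀ᵐ x ∂(volume : Measure ℝ), x ∈ Set.uIoc a b →
      ∀ ε ∈ ball (0 : ℝ) 1, HasDerivAt (fun ε => Fu f (Q ε x)) (DF ε x) ε := by
    refine Filter.Eventually.of_forall (fun x _ ε _ => ?_)
    have hcurve : HasDerivAt (fun ε => Q ε x) ((0, η x, deriv η x) : ℝ × ℝ × ℝ) ε :=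
      (hasDerivAt_const ε x).prodMk ((hasDerivAt_affine _ _ _).prodMk (hasDerivAt_affine _ _ _))
    exact ((hf.differentiable (by norm_num)).differentiableAt.hasFDerivAt).comp_hasDerivAt ε hcurve
  have key : HasDerivAt (fun ε => ∫ x in a..b, Fu f (Q ε x)) (∫ x in a..b, DF 0 x) 0 :=
    (intervalIntegral.hasDerivAt_integral_of_dominated_loc_of_deriv_le (ball_mem_nhds 0 one_pos)
      hmeas hint hmeas' hbound hbint hdiff).2
  have hle : ∀ ε : ℝ, (∫ x in a..b, Fu f (Q 0 x)) ≤ ∫ x in a..b, Fu f (Q ε x) := by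
    intro ε
    set u : ℝ → ℝ := fun x => y x + ε * η x with hu
    have hu2 : ContDiff ℝ 2 u := hy.add (contDiff_const.mul hη)
    have hderivu : deriv u = fun x => deriv y x + ε * deriv η x := by
      funext x
      exact (((hy1.differentiable one_ne_zero) x).hasDerivAt.add
        (((hη1.differentiable one_ne_zero) x).hasDerivAt.const_mul ε)).deriv
    have h1 : (∫ x in a..b, Fu f (Q 0 x)) = ∫ x in a..b, f x (y x) (deriv y x) := by
      simp [Fu, hQ]
    have h2 : (∫ x in a..b, Fu f (Q ε x)) = ∫ x in a..b, f x (u x) (deriv u x) := by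
      rw [hderivu]; rfl
    rw [h1, h2]
    exact hmin u hu2 (by simp [hu, hηa]) (by simp [hu, hηb])
  have hloc : IsLocalMin (fun ε => ∫ x in a..b, Fu f (Q ε x)) 0 :=
    Filter.Eventually.of_forall hle
  have hzero := hloc.hasDerivAt_eq_zero key
  rw [← hzero]
  apply intervalIntegral.integral_congr
  intro x _
  have hq0 : Q 0 x = (x, y x, deriv y x) := by simp [hQ]
  have hv : ((0, η x, deriv η x) : ℝ × ℝ × ℝ)
      = η x • ((0, 1, 0) : ℝ × ℝ × ℝ) + deriv η x • ((0, 0, 1) : ℝ × ℝ × ℝ) := by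
    simp [Prod.ext_iff]
  simp only [hDF, hq0, hv, map_add, ContinuousLinearMap.map_smul, smul_eq_mul, Fy, Fp]

/-- The Euler–Lagrange integral identity after integration by parts. -/
lemma EL_integral (f : ℝ → ℝ → ℝ → ℝ) (hf : ContDiff ℝ 2 (Fu f))
    (a b : ℝ) (hab : a < b) (y : ℝ → ℝ) (hy : ContDiff ℝ 2 y)
    (hmin : ∀ u : ℝ → ℝ, ContDiff ℝ 2 u → u a = y a → u b = y b →
      (∫ x in a..b, f x (y x) (deriv y x)) ≤ ∫ x in a..b, f x (u x) (deriv u x))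
    (η : ℝ → ℝ) (hη : ContDiff ℝ 2 η) (hηa : η a = 0) (hηb : η b = 0) :
    (∫ x in a..b, η x * (Fy f (x, y x, deriv y x)
        - deriv (fun t => Fp f (t, y t, deriv y t)) x)) = 0 := by
  have hy1 : ContDiff ℝ 1 y := hy.of_le one_le_two
  have hη1 : ContDiff ℝ 1 η := hη.of_le one_le_two
  have hηd : ContDiff ℝ 1 (deriv η) := deriv_contDiff hη
  have hP : ContDiff ℝ 1 (fun t => ((t, y t, deriv y t) : ℝ × ℝ × ℝ)) :=
    contDiff_id.prodMk (hy1.prodMk (deriv_contDiff hy))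
  set gp : ℝ → ℝ := fun t => Fp f (t, y t, deriv y t) with hgp
  set gy : ℝ → ℝ := fun t => Fy f (t, y t, deriv y t) with hgy
  have hgp1 : ContDiff ℝ 1 gp := (contDiff_Fp hf).comp hP
  have hgy1 : ContDiff ℝ 1 gy := (contDiff_Fy hf).comp hP
  have hgpd : Differentiable ℝ gp := hgp1.differentiable one_ne_zero
  have hgpdc : Continuous (deriv gp) := (contDiff_one_iff_deriv.mp hgp1).2
  have hibp := intervalIntegral.integral_mul_deriv_eq_deriv_mul
    (u := gp) (v := η) (u' := deriv gp) (v' := deriv η)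
    (fun x _ => (hgpd x).hasDerivAt)
    (fun x _ => ((hη1.differentiable one_ne_zero) x).hasDerivAt)
    (hgpdc.intervalIntegrable a b)
    ((hηd.continuous).intervalIntegrable a b)
  rw [hηa, hηb] at hibp
  have hibp' : (∫ x in a..b, gp x * deriv η x) + (∫ x in a..b, deriv gp x * η x) = 0 := by
    rw [hibp]; ring
  have hfv := first_variation f hf a b hab y hy hmin η hη hηa hηb
  have ig1 : IntervalIntegrable (fun x => η x * gy x + deriv η x * gp x) volume a b :=
    ((hη1.continuous.mul hgy1.continuous).add
      (hηd.continuous.mul hgp1.continuous)).intervalIntegrable a b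
  have ig2 : IntervalIntegrable (fun x => gp x * deriv η x + deriv gp x * η x) volume a b :=
    ((hgp1.continuous.mul hηd.continuous).add
      (hgpdc.mul hη1.continuous)).intervalIntegrable a b
  have e1 : (∫ x in a..b, η x * (gy x - deriv gp x))
      = (∫ x in a..b, (η x * gy x + deriv η x * gp x))
        - (∫ x in a..b, (gp x * deriv η x + deriv gp x * η x)) := by
    rw [← intervalIntegral.integral_sub ig1 ig2]
    apply intervalIntegral.integral_congr
    intro x _
    ring
  have e2 : (∫ x in a..b, (gp x * deriv η x + deriv gp x * η x)) = 0 := by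
    rw [intervalIntegral.integral_add (f := fun x => gp x * deriv η x) (g := fun x => deriv gp x * η x) ((hgp1.continuous.mul hηd.continuous).intervalIntegrable a b)
      ((hgpdc.mul hη1.continuous).intervalIntegrable a b)]
    exact hibp'
  rw [e1, hfv, e2, sub_zero]

end EulerLagrangeAux

open EulerLagrangeAux

/-- Euler–Lagrange necessary condition for a C² minimizer. -/
theorem euler_lagrange_necessary (f : ℝ → ℝ → ℝ → ℝ)
    (hf : ContDiff ℝ 2 (fun q : ℝ × ℝ × ℝ => f q.1 q.2.1 q.2.2))
    (a b : ℝ) (hab : a < b) (y : ℝ → ℝ) (hy : ContDiff ℝ 2 y)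
    (hmin : ∀ u : ℝ → ℝ, ContDiff ℝ 2 u → u a = y a → u b = y b →
      (∫ x in a..b, f x (y x) (deriv y x)) ≤ ∫ x in a..b, f x (u x) (deriv u x)) :
    ∀ x ∈ Set.Icc a b,
      deriv (fun s => f x s (deriv y x)) (y x)
        - deriv (fun t => deriv (fun p => f t (y t) p) (deriv y t)) x = 0 := by
  intro x hx
  have hfF : ContDiff ℝ 2 (Fu f) := hf
  have hP : ContDiff ℝ 1 (fun t => ((t, y t, deriv y t) : ℝ × ℝ × ℝ)) :=
    contDiff_id.prodMk ((hy.of_le one_le_two).prodMk (deriv_contDiff hy))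
  have hgp1 : ContDiff ℝ 1 (fun t => Fp f (t, y t, deriv y t)) := (contDiff_Fp hfF).comp hP
  have hE : Continuous (fun t => Fy f (t, y t, deriv y t)
      - deriv (fun t => Fp f (t, y t, deriv y t)) t) :=
    (((contDiff_Fy hfF).comp hP).continuous).sub (contDiff_one_iff_deriv.mp hgp1).2
  have hall : ∀ η : ℝ → ℝ, ContDiff ℝ 2 η → η a = 0 → η b = 0 →
      (∫ t in a..b, η t * (Fy f (t, y t, deriv y t)
        - deriv (fun s => Fp f (s, y s, deriv y s)) t)) = 0 := fun η hη hηa hηb =>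
    EL_integral f hfF a b hab y hy hmin η hη hηa hηb
  have hEzero := fundamental hE hab hall x hx
  have h1 : deriv (fun s => f x s (deriv y x)) (y x) = Fy f (x, y x, deriv y x) :=
    (hasDerivAt_Fy hfF x (y x) (deriv y x)).deriv
  have h2 : (fun t => deriv (fun p => f t (y t) p) (deriv y t))
      = fun t => Fp f (t, y t, deriv y t) :=
    funext fun t => (hasDerivAt_Fp hfF t (y t) (deriv y t)).deriv
  rw [h1, h2]
  exact hEzero
end

section
/- First variation formula: with f C² and y, η C² on [a,b] with η(a) = η(b) = 0, the derivative at ε = 0 of ε ↦ ∫_a^b f(x, y(x)+ε·η(x), y'(x)+ε·η'(x)) dx equals ∫_a^b [f_y(x,y,y') − d/dx f_{y'}(x,y,y')] η(x) dx. -/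
open MeasureTheory Set intervalIntegral

/-- First variation formula. -/
theorem first_variation_formula (f : ℝ → ℝ → ℝ → ℝ)
    (hf : ContDiff ℝ 2 (fun q : ℝ × ℝ × ℝ => f q.1 q.2.1 q.2.2))
    (a b : ℝ) (hab : a < b) (y η : ℝ → ℝ)
    (hy : ContDiff ℝ 2 y) (hη : ContDiff ℝ 2 η)
    (hηa : η a = 0) (hηb : η b = 0) :
    deriv (fun ε : ℝ =>
        ∫ x in a..b, f x (y x + ε * η x) (deriv y x + ε * deriv η x)) 0
      = ∫ x in a..b,
          (deriv (fun s => f x s (deriv y x)) (y x)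
            - deriv (fun t => deriv (fun p => f t (y t) p) (deriv y t)) x) * η x := by
  set F : ℝ × ℝ × ℝ → ℝ := fun q => f q.1 q.2.1 q.2.2 with hFdef
  have hF : ContDiff ℝ 2 F := hf
  have hFd : Differentiable ℝ F := hF.differentiable (by norm_num)
  have hF1 : ContDiff ℝ 1 (fderiv ℝ F) := hF.fderiv_right (by norm_num)
  have hF'c : Continuous (fderiv ℝ F) := hF1.continuous
  have hy2 : ContDiff ℝ (1+1) y := by norm_num; exact hy
  have hη2 : ContDiff ℝ (1+1) η := by norm_num; exact hη
  have hy' : ContDiff ℝ 1 (deriv y) := (contDiff_succ_iff_deriv.mp hy2).2.2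
  have hη' : ContDiff ℝ 1 (deriv η) := (contDiff_succ_iff_deriv.mp hη2).2.2
  have hyc : Continuous y := hy.continuous
  have hηc : Continuous η := hη.continuous
  have hy'c : Continuous (deriv y) := hy'.continuous
  have hη'c : Continuous (deriv η) := hη'.continuous
  -- path
  set P : ℝ → ℝ × ℝ × ℝ := fun t => (t, y t, deriv y t) with hPdef
  have hP1 : ContDiff ℝ 1 P := contDiff_id.prodMk ((hy.of_le (by norm_num)).prodMk hy')
  have hPc : Continuous P := hP1.continuous
  set A : ℝ → ℝ := fun t => fderiv ℝ F (P t) (0, 1, 0) with hAdef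
  set B : ℝ → ℝ := fun t => fderiv ℝ F (P t) (0, 0, 1) with hBdef
  have hAc : Continuous A := (hF'c.comp hPc).clm_apply continuous_const
  have hB1 : ContDiff ℝ 1 B := (hF1.comp hP1).clm_apply contDiff_const
  have hBc : Continuous B := hB1.continuous
  have hBd : Differentiable ℝ B := hB1.differentiable one_ne_zero
  have hB'c : Continuous (deriv B) := (contDiff_one_iff_deriv.mp hB1).2
  -- identify A with the partial derivative in the statement
  have hA : ∀ x : ℝ, HasDerivAt (fun s => f x s (deriv y x)) (A x) (y x) := by
    intro x
    have h1 : HasDerivAt (fun s : ℝ => (x, s, deriv y x)) ((0, 1, 0) : ℝ × ℝ × ℝ) (y x) :=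
      (hasDerivAt_const _ _).prodMk ((hasDerivAt_id _).prodMk (hasDerivAt_const _ _))
    exact (hFd (x, y x, deriv y x)).hasFDerivAt.comp_hasDerivAt (y x) h1
  have hB : ∀ t : ℝ, HasDerivAt (fun p => f t (y t) p) (B t) (deriv y t) := by
    intro t
    have h1 : HasDerivAt (fun p : ℝ => (t, y t, p)) ((0, 0, 1) : ℝ × ℝ × ℝ) (deriv y t) :=
      (hasDerivAt_const _ _).prodMk ((hasDerivAt_const _ _).prodMk (hasDerivAt_id _))
    exact (hFd (t, y t, deriv y t)).hasFDerivAt.comp_hasDerivAt (deriv y t) h1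
  have hBeq : (fun t => deriv (fun p => f t (y t) p) (deriv y t)) = B := by
    funext t; exact (hB t).deriv
  -- derivative of the partial-derivative composite along the path
  -- differentiation under the integral sign
  set G : ℝ → ℝ → ℝ := fun ε t =>
    fderiv ℝ F (t, y t + ε * η t, deriv y t + ε * deriv η t) (0, η t, deriv η t) with hGdef
  have hGc : Continuous (fun z : ℝ × ℝ => G z.1 z.2) := by
    apply Continuous.clm_apply
    · exact hF'c.comp (continuous_snd.prodMk
        (((hyc.comp continuous_snd).add (continuous_fst.mul (hηc.comp continuous_snd))).prodMk
         ((hy'c.comp continuous_snd).add (continuous_fst.mul (hη'c.comp continuous_snd)))))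
    · exact continuous_const.prodMk ((hηc.comp continuous_snd).prodMk (hη'c.comp continuous_snd))
  have hK : IsCompact (Icc (-1 : ℝ) 1 ×ˢ uIcc a b) := isCompact_Icc.prod isCompact_uIcc
  obtain ⟨C, hC⟩ := hK.exists_bound_of_continuousOn hGc.continuousOn
  have hdiffG : ∀ t : ℝ, ∀ ε : ℝ,
      HasDerivAt (fun ε => f t (y t + ε * η t) (deriv y t + ε * deriv η t)) (G ε t) ε := by
    intro t ε
    have h1 : HasDerivAt (fun ε : ℝ => (t, y t + ε * η t, deriv y t + ε * deriv η t))
        ((0, η t, deriv η t) : ℝ × ℝ × ℝ) ε :=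
      (hasDerivAt_const _ _).prodMk
        (((hasDerivAt_mul_const (η t)).const_add (y t)).prodMk
         ((hasDerivAt_mul_const (deriv η t)).const_add (deriv y t)))
    exact (hFd (t, y t + ε * η t, deriv y t + ε * deriv η t)).hasFDerivAt.comp_hasDerivAt ε h1
  have hΦc : ∀ ε : ℝ, Continuous (fun t => f t (y t + ε * η t) (deriv y t + ε * deriv η t)) := by
    intro ε
    exact hF.continuous.comp (continuous_id.prodMk
      ((hyc.add (continuous_const.mul hηc)).prodMk (hy'c.add (continuous_const.mul hη'c))))
  have hbound : ∀ t : ℝ, t ∈ uIoc a b → ∀ ε ∈ Metric.ball (0 : ℝ) 1, ‖G ε t‖ ≤ C := by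
    intro t ht ε hε
    have hmem : (ε, t) ∈ Icc (-1 : ℝ) 1 ×ˢ uIcc a b := by
      constructor
      · have h := Metric.mem_ball.mp hε
        simp only [Real.dist_eq, sub_zero] at h
        exact ⟨by linarith [(abs_le.mp h.le).1], by linarith [(abs_le.mp h.le).2]⟩
      · exact uIoc_subset_uIcc ht
    exact hC (ε, t) hmem
  have main := intervalIntegral.hasDerivAt_integral_of_dominated_loc_of_deriv_le
    (F := fun ε t => f t (y t + ε * η t) (deriv y t + ε * deriv η t))
    (F' := G) (x₀ := (0 : ℝ)) (bound := fun _ => C) (a := a) (b := b)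
    (μ := volume) (Metric.ball_mem_nhds 0 one_pos)
    (Filter.Eventually.of_forall fun ε => ((hΦc ε).aestronglyMeasurable).restrict)
    ((hΦc 0).intervalIntegrable a b)
    (((hGc.comp (continuous_const.prodMk continuous_id)).aestronglyMeasurable).restrict)
    (Filter.Eventually.of_forall hbound)
    intervalIntegrable_const
    (Filter.Eventually.of_forall fun t _ ε _ => hdiffG t ε)
  have hkey : HasDerivAt (fun ε : ℝ =>
      ∫ x in a..b, f x (y x + ε * η x) (deriv y x + ε * deriv η x))
      (∫ t in a..b, G 0 t) 0 := main.2
  have hG0 : ∀ t : ℝ, G 0 t = A t * η t + B t * deriv η t := by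
    intro t
    have hpt : ((0 : ℝ) , η t, deriv η t) =
        η t • ((0, 1, 0) : ℝ × ℝ × ℝ) + deriv η t • ((0, 0, 1) : ℝ × ℝ × ℝ) := by
      simp [Prod.ext_iff]
    have e1 : y t + 0 * η t = y t := by ring
    have e2 : deriv y t + 0 * deriv η t = deriv y t := by ring
    show fderiv ℝ F (t, y t + 0 * η t, deriv y t + 0 * deriv η t) (0, η t, deriv η t) = _
    rw [e1, e2, hpt, map_add, _root_.map_smul, _root_.map_smul, smul_eq_mul, smul_eq_mul]
    show η t * A t + deriv η t * B t = _
    ring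
  rw [hkey.deriv]
  -- rewrite the right-hand integrand
  have hRHS : ∀ x : ℝ, (deriv (fun s => f x s (deriv y x)) (y x)
      - deriv (fun t => deriv (fun p => f t (y t) p) (deriv y t)) x) * η x
      = (A x - deriv B x) * η x := by
    intro x
    rw [(hA x).deriv, hBeq]
  simp only [hRHS, hG0]
  -- integrability
  have iA : IntervalIntegrable (fun t => A t * η t) volume a b :=
    (hAc.mul hηc).intervalIntegrable a b
  have iB : IntervalIntegrable (fun t => B t * deriv η t) volume a b :=
    (hBc.mul hη'c).intervalIntegrable a b
  have iB' : IntervalIntegrable (fun t => deriv B t * η t) volume a b :=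
    (hB'c.mul hηc).intervalIntegrable a b
  have parts : ∫ x in a..b, deriv B x * η x + B x * deriv η x
      = B b * η b - B a * η a := by
    apply intervalIntegral.integral_deriv_mul_eq_sub
    · exact fun x _ => (hBd x).hasDerivAt
    · exact fun x _ => (hη.differentiable (by norm_num) x).hasDerivAt
    · exact hB'c.intervalIntegrable a b
    · exact hη'c.intervalIntegrable a b
  rw [hηa, hηb] at parts
  simp only [mul_zero, sub_zero] at parts
  rw [intervalIntegral.integral_add iA iB]
  have hsub : (fun x => (A x - deriv B x) * η x)
      = fun x => A x * η x - deriv B x * η x := by funext x; ring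
  rw [hsub, intervalIntegral.integral_sub iA iB']
  have hadd := intervalIntegral.integral_add iB' iB
  rw [parts] at hadd
  linarith
end

section
/- Legendre necessary condition: if f is C² and y is a C² minimizer of I[u] = ∫_a^b f(x,u,u') dx over C¹ functions with fixed endpoint values, then f_{pp}(x, y(x), y'(x)) ≥ 0 for all x in [a,b]. -/
open MeasureTheory Set


noncomputable def fpart (f : ℝ → ℝ → ℝ → ℝ) (q : ℝ × ℝ × ℝ) : ℝ :=
  fderiv ℝ (fun q : ℝ × ℝ × ℝ => f q.1 q.2.1 q.2.2) q (0,0,1)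

noncomputable def fpp (f : ℝ → ℝ → ℝ → ℝ) (q : ℝ × ℝ × ℝ) : ℝ :=
  fderiv ℝ (fpart f) q (0,0,1)

variable {f : ℝ → ℝ → ℝ → ℝ}

lemma contDiff_fpart (hf : ContDiff ℝ 2 (fun q : ℝ × ℝ × ℝ => f q.1 q.2.1 q.2.2)) :
    ContDiff ℝ 1 (fpart f) :=
  (hf.fderiv_right (by norm_num)).clm_apply contDiff_const

lemma continuous_fpp (hf : ContDiff ℝ 2 (fun q : ℝ × ℝ × ℝ => f q.1 q.2.1 q.2.2)) :
    Continuous (fpp f) :=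
  (((contDiff_fpart hf).fderiv_right (m := 0) (by norm_num)).clm_apply contDiff_const).continuous

lemma hasDerivAt_embed (x u p : ℝ) :
    HasDerivAt (fun p' : ℝ => ((x, u, p') : ℝ × ℝ × ℝ)) ((0,0,1) : ℝ × ℝ × ℝ) p :=
  (hasDerivAt_const p x).prodMk ((hasDerivAt_const p u).prodMk (hasDerivAt_id p))

lemma hasDerivAt_partial3 (hf : ContDiff ℝ 2 (fun q : ℝ × ℝ × ℝ => f q.1 q.2.1 q.2.2))
    (x u p : ℝ) : HasDerivAt (fun p' => f x u p') (fpart f (x, u, p)) p := by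
  have hd : DifferentiableAt ℝ (fun q : ℝ × ℝ × ℝ => f q.1 q.2.1 q.2.2) (x, u, p) :=
    (hf.differentiable (by norm_num)).differentiableAt
  exact hd.hasFDerivAt.comp_hasDerivAt p (hasDerivAt_embed x u p)

lemma hasDerivAt_fpart3 (hf : ContDiff ℝ 2 (fun q : ℝ × ℝ × ℝ => f q.1 q.2.1 q.2.2))
    (x u p : ℝ) : HasDerivAt (fun p' => fpart f (x, u, p')) (fpp f (x, u, p)) p := by
  have hd : DifferentiableAt ℝ (fpart f) (x, u, p) :=
    ((contDiff_fpart hf).differentiable (by norm_num)).differentiableAt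
  exact hd.hasFDerivAt.comp_hasDerivAt p (hasDerivAt_embed x u p)

lemma deriv_partial3 (hf : ContDiff ℝ 2 (fun q : ℝ × ℝ × ℝ => f q.1 q.2.1 q.2.2))
    (x u p : ℝ) :
    deriv (fun p => deriv (fun p' => f x u p') p) p = fpp f (x, u, p) := by
  have h1 : (fun p => deriv (fun p' => f x u p') p) = fun p => fpart f (x, u, p) := by
    funext q; exact (hasDerivAt_partial3 hf x u q).deriv
  rw [h1]
  exact (hasDerivAt_fpart3 hf x u p).deriv

/-- one-dimensional quadratic upper Taylor bound -/
lemma quad_bound {k k' k'' : ℝ → ℝ} {B : ℝ}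
    (h1 : ∀ t, HasDerivAt k (k' t) t) (h2 : ∀ t, HasDerivAt k' (k'' t) t)
    (hB : ∀ t ∈ Icc (0:ℝ) 1, k'' t ≤ B) : k 1 ≤ k 0 + k' 0 + B / 2 := by
  have hk'le : ∀ t ∈ Icc (0:ℝ) 1, k' t ≤ k' 0 + B * t := by
    intro t ht
    have hanti : AntitoneOn (fun t => k' t - B * t) (Icc 0 1) := by
      apply antitoneOn_of_deriv_nonpos (convex_Icc 0 1)
      · exact fun t _ => ((h2 t).sub ((hasDerivAt_id' (x := t)).const_mul B)).continuousAt.continuousWithinAt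
      · intro t ht
        exact ((h2 t).sub (((hasDerivAt_id' (x := t)).const_mul B))).differentiableAt.differentiableWithinAt
      · intro t ht
        rw [show deriv (fun t => k' t - B * t) t = _ from ((h2 t).sub ((hasDerivAt_id' (x := t)).const_mul B)).deriv]
        have := hB t (Ioo_subset_Icc_self (by rwa [interior_Icc] at ht))
        simpa using by linarith
    have := hanti (left_mem_Icc.2 (by norm_num)) ht ht.1
    simp at this; linarith
  have hanti2 : AntitoneOn (fun t => k t - (k 0 + k' 0 * t + B * t ^ 2 / 2)) (Icc 0 1) := by
    apply antitoneOn_of_deriv_nonpos (convex_Icc 0 1)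
    · intro t _
      exact ((h1 t).sub (((hasDerivAt_const t (k 0)).add
        ((hasDerivAt_id' (x := t)).const_mul (k' 0))).add
        (((hasDerivAt_pow 2 t).const_mul B).div_const 2))).continuousAt.continuousWithinAt
    · intro t _
      exact ((h1 t).sub (((hasDerivAt_const t (k 0)).add
        ((hasDerivAt_id' (x := t)).const_mul (k' 0))).add
        (((hasDerivAt_pow 2 t).const_mul B).div_const 2))).differentiableAt.differentiableWithinAt
    · intro t ht
      rw [interior_Icc] at ht
      rw [show deriv (fun t => k t - (k 0 + k' 0 * t + B * t ^ 2 / 2)) t = _ from ((h1 t).sub (((hasDerivAt_const t (k 0)).add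
        ((hasDerivAt_id' (x := t)).const_mul (k' 0))).add
        (((hasDerivAt_pow 2 t).const_mul B).div_const 2))).deriv]
      have := hk'le t (Ioo_subset_Icc_self ht)
      have ht0 : (0:ℝ) ≤ t := le_of_lt ht.1
      ring_nf
      nlinarith
  have := hanti2 (left_mem_Icc.2 (by norm_num)) (right_mem_Icc.2 (by norm_num)) zero_le_one
  simp at this; linarith

noncomputable def psib : ContDiffBump (0:ℝ) := ⟨1, 2, one_pos, one_lt_two⟩

lemma psi_contDiff : ContDiff ℝ 2 (fun t => psib t) := psib.contDiff
lemma psi_zero : psib (0:ℝ) = 1 := psib.one_of_mem_closedBall (by simp [psib])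
lemma psi_one : psib (1:ℝ) = 1 := psib.one_of_mem_closedBall (by simp [psib])
lemma psi_eq_zero {t : ℝ} (ht : 2 ≤ |t|) : psib t = 0 := by
  have : t ∉ Metric.ball (0:ℝ) psib.rOut := by
    simp [psib, Real.dist_eq]; linarith
  by_contra h
  exact this (psib.support_eq ▸ Function.mem_support.2 h)
lemma psi_nonneg (t : ℝ) : 0 ≤ psib t := psib.nonneg
lemma psi_le_one (t : ℝ) : psib t ≤ 1 := psib.le_one

lemma psi_deriv_continuous : Continuous (deriv (fun t => psib t)) :=
  psi_contDiff.continuous_deriv (by norm_num)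

lemma psi_deriv_eq_zero {t : ℝ} (ht : 2 < |t|) : deriv (fun t => psib t) t = 0 := by
  have hopen : IsOpen {s : ℝ | 2 < |s|} := by
    have : {s : ℝ | 2 < |s|} = (fun s : ℝ => |s|) ⁻¹' (Ioi 2) := rfl
    rw [this]; exact isOpen_Ioi.preimage (continuous_abs)
  have hev : (fun t => psib t) =ᶠ[nhds t] (fun _ => (0:ℝ)) := by
    filter_upwards [hopen.mem_nhds ht] with s hs
    exact psi_eq_zero (le_of_lt hs)
  rw [hev.deriv_eq]; simp

lemma psi_exists_slope : ∃ t₀ ∈ Ioo (1:ℝ) 2, deriv (fun t => psib t) t₀ = -1 := by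
  obtain ⟨c, hc, hc2⟩ := exists_deriv_eq_slope (fun t => psib t) one_lt_two
    (psi_contDiff.continuous.continuousOn)
    ((psi_contDiff.differentiable (by norm_num)).differentiableOn)
  refine ⟨c, hc, ?_⟩
  rw [hc2, psi_eq_zero (by norm_num), psi_one]; norm_num

lemma psi_J_pos : 0 < ∫ t in (-3:ℝ)..3, (deriv (fun t => psib t) t)^2 := by
  obtain ⟨t₀, ht₀, hs⟩ := psi_exists_slope
  have hcont : Continuous fun t => (deriv (fun t => psib t) t)^2 := psi_deriv_continuous.pow 2
  have hopen : IsOpen ({t : ℝ | 1/2 < (deriv (fun t => psib t) t)^2} ∩ Ioo 1 2) :=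
    (isOpen_Ioi.preimage hcont).inter isOpen_Ioo
  have ht₀mem : t₀ ∈ {t : ℝ | 1/2 < (deriv (fun t => psib t) t)^2} ∩ Ioo 1 2 := by
    constructor
    · simp [hs]; norm_num
    · exact ht₀
  obtain ⟨r, hr, hball⟩ := Metric.isOpen_iff.1 hopen t₀ ht₀mem
  set δ := min (r/2) (1/2) with hδdef
  have hδpos : 0 < δ := by positivity
  have hsub : Icc (t₀ - δ) (t₀ + δ) ⊆ {t : ℝ | 1/2 < (deriv (fun t => psib t) t)^2} ∩ Ioo 1 2 := by
    intro s hsmem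
    apply hball
    rw [Metric.mem_ball, Real.dist_eq]
    rw [mem_Icc] at hsmem
    have : δ < r := lt_of_le_of_lt (min_le_left _ _) (by linarith)
    rw [abs_sub_lt_iff]; constructor <;> linarith
  have hint : ∀ u v : ℝ, IntervalIntegrable (fun t => (deriv (fun t => psib t) t)^2) volume u v :=
    fun u v => hcont.intervalIntegrable u v
  have h1 : (-3:ℝ) ≤ t₀ - δ := by
    have := ht₀.1; have : δ ≤ 1/2 := min_le_right _ _; linarith [ht₀.1]
  have h2 : t₀ + δ ≤ 3 := by
    have := ht₀.2; have : δ ≤ 1/2 := min_le_right _ _; linarith [ht₀.2]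
  have hnn : ∀ u v : ℝ, u ≤ v → 0 ≤ ∫ t in u..v, (deriv (fun t => psib t) t)^2 :=
    fun u v huv => intervalIntegral.integral_nonneg huv (fun t _ => sq_nonneg _)
  have hmid : δ ≤ ∫ t in (t₀-δ)..(t₀+δ), (deriv (fun t => psib t) t)^2 := by
    have hconst : ∫ t in (t₀-δ)..(t₀+δ), (1/2 : ℝ) = δ := by
      simp [intervalIntegral.integral_const]; ring
    calc δ = ∫ t in (t₀-δ)..(t₀+δ), (1/2 : ℝ) := hconst.symm
      _ ≤ _ := intervalIntegral.integral_mono_on (by linarith)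
          (intervalIntegrable_const) (hint _ _)
          (fun s hsmem => le_of_lt (hsub hsmem).1)
  have hsplit : ∫ t in (-3:ℝ)..3, (deriv (fun t => psib t) t)^2
      = (∫ t in (-3:ℝ)..(t₀-δ), (deriv (fun t => psib t) t)^2)
      + (∫ t in (t₀-δ)..(t₀+δ), (deriv (fun t => psib t) t)^2)
      + (∫ t in (t₀+δ)..(3:ℝ), (deriv (fun t => psib t) t)^2) := by
    rw [intervalIntegral.integral_add_adjacent_intervals (hint _ _) (hint _ _),
      intervalIntegral.integral_add_adjacent_intervals (hint _ _) (hint _ _)]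
  rw [hsplit]
  have := hnn (-3) (t₀ - δ) h1
  have := hnn (t₀+δ) 3 h2
  linarith

lemma scale_integral (F : ℝ → ℝ) (x₀ : ℝ) {ε : ℝ} (hε : 0 < ε) :
    ∫ x in (x₀ - 3*ε)..(x₀ + 3*ε), F ((x - x₀)/ε) = ε * ∫ t in (-3:ℝ)..3, F t := by
  have h1 := intervalIntegral.integral_comp_sub_right (a := x₀ - 3*ε) (b := x₀ + 3*ε)
    (fun x => F (x/ε)) x₀
  have h2 := intervalIntegral.integral_comp_div (a := x₀ - 3*ε - x₀) (b := x₀ + 3*ε - x₀)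
    F (ne_of_gt hε)
  have e1 : (x₀ - 3*ε - x₀)/ε = -3 := by field_simp; ring
  have e2 : (x₀ + 3*ε - x₀)/ε = 3 := by field_simp; ring
  rw [h1, h2, e1, e2, smul_eq_mul]
set_option maxHeartbeats 1000000 in
/-- Legendre necessary condition: along a minimizer, f_pp ≥ 0. -/
theorem legendre_necessary_condition (f : ℝ → ℝ → ℝ → ℝ)
    (hf : ContDiff ℝ 2 (fun q : ℝ × ℝ × ℝ => f q.1 q.2.1 q.2.2))
    (a b : ℝ) (hab : a < b) (y : ℝ → ℝ) (hy : ContDiff ℝ 2 y)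
    (hmin : ∀ u : ℝ → ℝ, ContDiff ℝ 1 u → u a = y a → u b = y b →
      (∫ x in a..b, f x (y x) (deriv y x)) ≤ ∫ x in a..b, f x (u x) (deriv u x)) :
    ∀ x ∈ Set.Icc a b,
      0 ≤ deriv (fun p => deriv (fun p' => f x (y x) p') p) (deriv y x) := by
  intro x₁ hx₁
  rw [deriv_partial3 hf]
  have hycont : Continuous y := hy.continuous
  have hy'cont : Continuous (deriv y) := hy.continuous_deriv one_le_two
  set G : ℝ → ℝ := fun x => fpp f (x, y x, deriv y x) with hGdef
  have hGcont : Continuous G := (continuous_fpp hf).comp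
    (continuous_id.prodMk (hycont.prodMk hy'cont))
  suffices hIoo : ∀ x ∈ Set.Ioo a b, 0 ≤ G x by
    have hclosed : IsClosed {x | 0 ≤ G x} := isClosed_le continuous_const hGcont
    have hsub : Set.Icc a b ⊆ {x | 0 ≤ G x} := by
      rw [← closure_Ioo hab.ne]
      exact hclosed.closure_subset_iff.2 hIoo
    exact hsub hx₁
  intro x₀ hx₀
  by_contra hA
  push_neg at hA
  set A := G x₀ with hAdef
  -- step 1 : a δ-neighbourhood where fpp < A/2
  set Φ : ℝ × ℝ → ℝ := fun w => fpp f (w.1, y w.1, deriv y w.1 + w.2) with hΦdef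
  have hΦcont : Continuous Φ := (continuous_fpp hf).comp
    ((continuous_fst).prodMk ((hycont.comp continuous_fst).prodMk
      ((hy'cont.comp continuous_fst).add continuous_snd)))
  have hΦx₀ : Φ (x₀, 0) = A := by simp [hΦdef, hAdef, hGdef]
  obtain ⟨r₁, hr₁, hball₁⟩ := Metric.isOpen_iff.1
    ((isOpen_Iio (a := A/2)).preimage hΦcont) (x₀, 0)
    (by simp only [Set.mem_preimage, hΦx₀, Set.mem_Iio]; linarith)
  set δ := r₁ / 2 with hδdef
  have hδpos : 0 < δ := by positivity
  have hPδ : ∀ x r : ℝ, |x - x₀| ≤ δ → |r| ≤ δ →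
      fpp f (x, y x, deriv y x + r) < A / 2 := by
    intro x r h1 h2
    have hmem : ((x, r) : ℝ × ℝ) ∈ Metric.ball ((x₀, (0:ℝ))) r₁ := by
      rw [Metric.mem_ball, Prod.dist_eq, Real.dist_eq, Real.dist_eq, sub_zero]
      exact lt_of_le_of_lt (max_le h1 h2) (by rw [hδdef] at h1 h2 ⊢; linarith)
    exact hball₁ hmem
  -- step 2 : constants
  obtain ⟨M₀, hM₀⟩ := (isCompact_Icc (a := (-3:ℝ)) (b := 3)).exists_bound_of_continuousOn
    (psi_deriv_continuous.continuousOn)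
  set M' := max M₀ 1 with hM'def
  have hM'1 : (1:ℝ) ≤ M' := le_max_right _ _
  have hM'pos : (0:ℝ) < M' := lt_of_lt_of_le one_pos hM'1
  have hM' : ∀ t ∈ Set.Icc (-3:ℝ) 3, |deriv (fun t => psib t) t| ≤ M' := by
    intro t ht
    calc |deriv (fun t => psib t) t| = ‖deriv (fun t => psib t) t‖ := rfl
      _ ≤ M₀ := hM₀ t ht
      _ ≤ M' := le_max_left _ _
  set c := min 1 (δ / M') with hcdef
  have hc0 : 0 < c := lt_min one_pos (by positivity)
  have hc1 : c ≤ 1 := min_le_left _ _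
  have hcM' : c * M' ≤ δ := by
    have : c ≤ δ / M' := min_le_right _ _
    calc c * M' ≤ (δ / M') * M' := by nlinarith
      _ = δ := by field_simp
  set J := ∫ t in (-3:ℝ)..3, (deriv (fun t => psib t) t)^2 with hJdef
  have hJ : 0 < J := psi_J_pos
  obtain ⟨My, hMy⟩ := (isCompact_Icc (a := a) (b := b)).exists_bound_of_continuousOn
    hycont.continuousOn
  obtain ⟨My', hMy'⟩ := (isCompact_Icc (a := a) (b := b)).exists_bound_of_continuousOn
    hy'cont.continuousOn
  set K : Set (ℝ × ℝ × ℝ) :=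
    Set.Icc a b ×ˢ Set.Icc (-(My+1)) (My+1) ×ˢ Set.Icc (-(My'+M')) (My'+M') with hKdef
  have hKconv : Convex ℝ K := (convex_Icc _ _).prod ((convex_Icc _ _).prod (convex_Icc _ _))
  have hKcpt : IsCompact K := isCompact_Icc.prod (isCompact_Icc.prod isCompact_Icc)
  obtain ⟨L₀, hL₀⟩ := hKcpt.exists_bound_of_continuousOn
    ((hf.continuous_fderiv (by norm_num)).continuousOn)
  set L := max L₀ 1 with hLdef
  have hL1 : (1:ℝ) ≤ L := le_max_right _ _
  have hLpos : (0:ℝ) < L := lt_of_lt_of_le one_pos hL1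
  have hL : ∀ q ∈ K, ‖fderiv ℝ (fun q : ℝ × ℝ × ℝ => f q.1 q.2.1 q.2.2) q‖ ≤ L :=
    fun q hq => le_trans (hL₀ q hq) (le_max_left _ _)
  set h : ℝ → ℝ := fun x => fpart f (x, y x, deriv y x) with hhdef
  have hhcont : Continuous h := ((contDiff_fpart hf).continuous).comp
    (continuous_id.prodMk (hycont.prodMk hy'cont))
  have hA' : (0:ℝ) < -A := by linarith
  set η := (-A) * c * J / (48 * M') with hηdef
  have hηpos : 0 < η := by
    apply div_pos (mul_pos (mul_pos hA' hc0) hJ) (by positivity)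
  obtain ⟨δ₂', hδ₂'pos, hδ₂'⟩ := Metric.continuous_iff.1 hhcont x₀ η hηpos
  set δ₂ := δ₂' / 2 with hδ₂def
  have hδ₂pos : 0 < δ₂ := by positivity
  have hhnear : ∀ x : ℝ, |x - x₀| ≤ δ₂ → |h x - h x₀| ≤ η := by
    intro x hx
    have : dist x x₀ < δ₂' := by rw [Real.dist_eq]; rw [hδ₂def] at hx; linarith
    have := hδ₂' x this
    rw [Real.dist_eq] at this; linarith
  -- step 3 : choice of ε
  set ε := min (min 1 ((x₀ - a)/3)) (min ((b - x₀)/3)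
    (min (δ/3) (min (δ₂/3) ((-A)*c*J/(96*L))))) with hεdef
  have hεpos : 0 < ε := by
    have h1 : 0 < x₀ - a := by linarith [hx₀.1]
    have h2 : 0 < b - x₀ := by linarith [hx₀.2]
    have h3 : 0 < (-A)*c*J/(96*L) := by
      apply div_pos (mul_pos (mul_pos hA' hc0) hJ) (by positivity)
    apply lt_min (lt_min one_pos (by positivity))
    exact lt_min (by positivity) (lt_min (by positivity) (lt_min (by positivity) h3))
  have hε1 : ε ≤ 1 := le_trans (min_le_left _ _) (min_le_left _ _)
  have hεa : 3*ε ≤ x₀ - a := by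
    have : ε ≤ (x₀ - a)/3 := le_trans (min_le_left _ _) (min_le_right _ _)
    linarith
  have hεb : 3*ε ≤ b - x₀ := by
    have : ε ≤ (b - x₀)/3 := le_trans (min_le_right _ _) (min_le_left _ _)
    linarith
  have hεδ : 3*ε ≤ δ := by
    have : ε ≤ δ/3 := le_trans (min_le_right _ _) (le_trans (min_le_right _ _) (min_le_left _ _))
    linarith
  have hεδ₂ : 3*ε ≤ δ₂ := by
    have : ε ≤ δ₂/3 := le_trans (min_le_right _ _) (le_trans (min_le_right _ _)
      (le_trans (min_le_right _ _) (min_le_left _ _)))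
    linarith
  have hεL : ε ≤ (-A)*c*J/(96*L) := le_trans (min_le_right _ _) (le_trans (min_le_right _ _)
      (le_trans (min_le_right _ _) (min_le_right _ _)))
  -- step 4 : the variation
  set s : ℝ → ℝ := fun x => c * deriv (fun t => psib t) ((x - x₀)/ε) with hsdef
  set φ : ℝ → ℝ := fun x => c * ε * psib ((x - x₀)/ε) with hφdef
  set u : ℝ → ℝ := fun x => y x + φ x with hudef
  have hstriv : ∀ x : ℝ, 3*ε ≤ |x - x₀| → φ x = 0 ∧ s x = 0 := by
    intro x hx
    have ht : 3 ≤ |(x - x₀)/ε| := by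
      rw [abs_div, abs_of_pos hεpos, le_div_iff₀ hεpos]; linarith
    constructor
    · rw [hφdef]; simp only; rw [psi_eq_zero (by linarith), mul_zero]
    · rw [hsdef]; simp only; rw [psi_deriv_eq_zero (by linarith), mul_zero]
  have hinner : ∀ x : ℝ, HasDerivAt (fun x => (x - x₀)/ε) (1/ε) x := by
    intro x
    simpa using ((hasDerivAt_id' (x := x)).sub_const x₀).div_const ε
  have hψd : ∀ t : ℝ, HasDerivAt (fun t => psib t) (deriv (fun t => psib t) t) t :=
    fun t => ((psi_contDiff.differentiable (by norm_num)) t).hasDerivAt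
  have hφd : ∀ x : ℝ, HasDerivAt φ (s x) x := by
    intro x
    have h1 := ((hψd ((x - x₀)/ε)).comp x (hinner x)).const_mul (c * ε)
    have heq : c * ε * (deriv (fun t => psib t) ((x - x₀)/ε) * (1/ε)) = s x := by
      rw [hsdef]; field_simp
    exact heq ▸ h1
  have hud : ∀ x : ℝ, HasDerivAt u (deriv y x + s x) x :=
    fun x => ((hy.differentiable (by norm_num) x).hasDerivAt).add (hφd x)
  have hu_deriv : ∀ x, deriv u x = deriv y x + s x := fun x => (hud x).deriv
  have hφCD : ContDiff ℝ 1 φ :=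
    contDiff_const.mul ((psib.contDiff (n := 1)).comp
      ((contDiff_id.sub contDiff_const).div_const ε))
  have huCD : ContDiff ℝ 1 u := (hy.of_le one_le_two).add hφCD
  have hua : u a = y a := by
    have := (hstriv a (by rw [abs_sub_comm, abs_of_pos (by linarith [hx₀.1])]; linarith)).1
    rw [hudef]; simp only; rw [this, add_zero]
  have hub : u b = y b := by
    have := (hstriv b (by rw [abs_of_pos (by linarith [hx₀.2])]; linarith)).1
    rw [hudef]; simp only; rw [this, add_zero]
  have key := hmin u huCD hua hub
  -- step 5 : integrability and splitting
  have hscont : Continuous s := continuous_const.mul (psi_deriv_continuous.comp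
    ((continuous_id.sub continuous_const).div_const ε))
  have hucont : Continuous u := huCD.continuous
  have hu'cont : Continuous (deriv u) := by
    have : deriv u = fun x => deriv y x + s x := funext hu_deriv
    rw [this]; exact hy'cont.add hscont
  have hfc : Continuous (fun q : ℝ × ℝ × ℝ => f q.1 q.2.1 q.2.2) := hf.continuous
  have hfu : Continuous (fun x => f x (u x) (deriv u x)) :=
    hfc.comp (continuous_id.prodMk (hucont.prodMk hu'cont))
  have hfy : Continuous (fun x => f x (y x) (deriv y x)) :=
    hfc.comp (continuous_id.prodMk (hycont.prodMk hy'cont))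
  set g : ℝ → ℝ := fun x => f x (u x) (deriv u x) - f x (y x) (deriv y x) with hgdef
  have hgcont : Continuous g := hfu.sub hfy
  have hgInt : ∀ p q : ℝ, IntervalIntegrable g volume p q := fun p q =>
    hgcont.intervalIntegrable p q
  have h0g : 0 ≤ ∫ x in a..b, g x := by
    rw [hgdef]
    rw [intervalIntegral.integral_sub (hfu.intervalIntegrable a b) (hfy.intervalIntegrable a b)]
    linarith
  set l := x₀ - 3*ε with hldef
  set r := x₀ + 3*ε with hrdef
  have hal : a ≤ l := by rw [hldef]; linarith
  have hrb : r ≤ b := by rw [hrdef]; linarith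
  have hlr : l ≤ r := by rw [hldef, hrdef]; linarith
  have hgzero : ∀ x : ℝ, 3*ε ≤ |x - x₀| → g x = 0 := by
    intro x hx
    obtain ⟨h1, h2⟩ := hstriv x hx
    rw [hgdef]; simp only
    rw [hu_deriv x, h2, add_zero]
    rw [hudef]; simp only; rw [h1, add_zero, sub_self]
  have hz1 : ∫ x in a..l, g x = 0 := by
    have heq : Set.EqOn g (fun _ => (0:ℝ)) (Set.uIcc a l) := by
      intro x hx
      rw [Set.uIcc_of_le hal, Set.mem_Icc] at hx
      apply hgzero
      rw [abs_sub_comm, abs_of_nonneg (by linarith [hx.2, hεpos])]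
      linarith [hx.2]
    rw [intervalIntegral.integral_congr heq, intervalIntegral.integral_zero]
  have hz2 : ∫ x in r..b, g x = 0 := by
    have heq : Set.EqOn g (fun _ => (0:ℝ)) (Set.uIcc r b) := by
      intro x hx
      rw [Set.uIcc_of_le hrb, Set.mem_Icc] at hx
      apply hgzero
      rw [abs_of_nonneg (by linarith [hx.1, hεpos])]
      linarith [hx.1]
    rw [intervalIntegral.integral_congr heq, intervalIntegral.integral_zero]
  have hsplit : ∫ x in a..b, g x = ∫ x in l..r, g x := by
    have e1 := intervalIntegral.integral_add_adjacent_intervals (hgInt a l) (hgInt l b)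
    have e2 := intervalIntegral.integral_add_adjacent_intervals (hgInt l r) (hgInt r b)
    rw [← e1, ← e2, hz1, hz2]; ring
  -- step 6 : pointwise bound on [l, r]
  have habs : ∀ x ∈ Set.Icc l r, |x - x₀| ≤ 3*ε := by
    intro x hx
    rw [Set.mem_Icc] at hx
    rw [abs_le]
    constructor
    · rw [hldef] at hx; linarith [hx.1]
    · rw [hrdef] at hx; linarith [hx.2]
  have hsabs : ∀ x ∈ Set.Icc l r, |s x| ≤ c * M' := by
    intro x hx
    have ht3 : |(x - x₀)/ε| ≤ 3 := by
      rw [abs_div, abs_of_pos hεpos, div_le_iff₀ hεpos]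
      linarith [habs x hx]
    have hψ'b : |deriv (fun t => psib t) ((x - x₀)/ε)| ≤ M' :=
      hM' _ (by rw [Set.mem_Icc, ← abs_le]; exact ht3)
    rw [hsdef]; simp only
    rw [abs_mul, abs_of_pos hc0]
    exact mul_le_mul_of_nonneg_left hψ'b (le_of_lt hc0)
  have hcM'M : c * M' ≤ M' := by
    have := mul_le_mul_of_nonneg_right hc1 (le_of_lt hM'pos)
    rwa [one_mul] at this
  have hbnd : ∀ x ∈ Set.Icc l r, g x ≤
      L*c*ε*(psib ((x - x₀)/ε)) + s x * h x
        + A/4*c^2*(deriv (fun t => psib t) ((x - x₀)/ε))^2 := by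
    intro x hx
    have hxx₀ : |x - x₀| ≤ 3*ε := habs x hx
    have hsb : |s x| ≤ c * M' := hsabs x hx
    rw [Set.mem_Icc] at hx
    have hxab : x ∈ Set.Icc a b := ⟨le_trans hal hx.1, le_trans hx.2 hrb⟩
    have hψnn : 0 ≤ psib ((x - x₀)/ε) := psi_nonneg _
    have hψle : psib ((x - x₀)/ε) ≤ 1 := psi_le_one _
    have hφnn : 0 ≤ φ x := by
      rw [hφdef]; simp only
      exact mul_nonneg (by positivity) hψnn
    have hφle : φ x ≤ c * ε := by
      rw [hφdef]; simp only
      calc c * ε * psib ((x - x₀)/ε) ≤ c * ε * 1 :=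
            mul_le_mul_of_nonneg_left hψle (by positivity)
        _ = c * ε := mul_one _
    have hyb := hMy x hxab
    have hy'b := hMy' x hxab
    rw [Real.norm_eq_abs, abs_le] at hyb hy'b
    set w := deriv y x + s x with hwdef
    have hsb2 : |s x| ≤ M' := le_trans hsb hcM'M
    have hwb : w ∈ Set.Icc (-(My'+M')) (My'+M') := by
      rw [Set.mem_Icc, hwdef]
      rw [abs_le] at hsb2
      constructor <;> [linarith [hy'b.1, hsb2.1]; linarith [hy'b.2, hsb2.2]]
    have hcε1 : c * ε ≤ 1 := by
      calc c * ε ≤ 1 * 1 := mul_le_mul hc1 hε1 (le_of_lt hεpos) zero_le_one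
        _ = 1 := mul_one 1
    have hym : y x ∈ Set.Icc (-(My+1)) (My+1) := by
      rw [Set.mem_Icc]
      constructor <;> [linarith [hyb.1]; linarith [hyb.2]]
    have hum : u x ∈ Set.Icc (-(My+1)) (My+1) := by
      rw [Set.mem_Icc, hudef]; simp only
      constructor <;> [linarith [hyb.1, hφnn]; linarith [hyb.2, hφle, hcε1]]
    have hq1K : ((x, y x, w) : ℝ × ℝ × ℝ) ∈ K := by
      rw [hKdef]; exact ⟨hxab, hym, hwb⟩
    have hq2K : ((x, u x, w) : ℝ × ℝ × ℝ) ∈ K := by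
      rw [hKdef]; exact ⟨hxab, hum, hwb⟩
    -- the T1 estimate (mean value in the middle variable)
    have hT1 : f x (u x) w - f x (y x) w ≤ L * φ x := by
      have hmv := Convex.norm_image_sub_le_of_norm_fderiv_le
        (f := fun q : ℝ × ℝ × ℝ => f q.1 q.2.1 q.2.2)
        (fun q _ => hf.differentiable (by norm_num) q) hL hKconv hq1K hq2K
      have hdiff : ((x, u x, w) : ℝ × ℝ × ℝ) - (x, y x, w) = (0, φ x, 0) := by
        rw [hudef, Prod.mk_sub_mk, Prod.mk_sub_mk]
        simp only
        rw [sub_self, sub_self, add_sub_cancel_left]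
      have hnorm : ‖((x, u x, w) : ℝ × ℝ × ℝ) - (x, y x, w)‖ = φ x := by
        rw [hdiff]
        simp [Prod.norm_def, Real.norm_eq_abs, abs_of_nonneg hφnn,
          max_eq_left hφnn, max_eq_right hφnn]
      calc f x (u x) w - f x (y x) w
          ≤ |f x (u x) w - f x (y x) w| := le_abs_self _
        _ = ‖(fun q : ℝ × ℝ × ℝ => f q.1 q.2.1 q.2.2) (x, u x, w)
              - (fun q : ℝ × ℝ × ℝ => f q.1 q.2.1 q.2.2) (x, y x, w)‖ := rfl
        _ ≤ L * ‖((x, u x, w) : ℝ × ℝ × ℝ) - (x, y x, w)‖ := hmv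
        _ = L * φ x := by rw [hnorm]
    -- the T2 estimate (Taylor bound in the third variable)
    have hT2 : f x (y x) w - f x (y x) (deriv y x) ≤ s x * h x + A/4 * (s x)^2 := by
      have hτ : ∀ τ : ℝ, HasDerivAt (fun τ : ℝ => deriv y x + τ * s x) (s x) τ := by
        intro τ
        simpa using ((hasDerivAt_id' (𝕜 := ℝ) (x := τ)).mul_const (s x)).const_add (deriv y x)
      have hk1 : ∀ τ : ℝ, HasDerivAt (fun τ => f x (y x) (deriv y x + τ * s x))
          (fpart f (x, y x, deriv y x + τ * s x) * s x) τ := fun τ =>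
        (hasDerivAt_partial3 hf x (y x) _).comp τ (hτ τ)
      have hk2 : ∀ τ : ℝ, HasDerivAt (fun τ => fpart f (x, y x, deriv y x + τ * s x) * s x)
          (fpp f (x, y x, deriv y x + τ * s x) * s x * s x) τ := fun τ =>
        ((hasDerivAt_fpart3 hf x (y x) _).comp τ (hτ τ)).mul_const (s x)
      have hB : ∀ τ ∈ Set.Icc (0:ℝ) 1,
          fpp f (x, y x, deriv y x + τ * s x) * s x * s x ≤ A/2 * (s x)^2 := by
        intro τ hτm
        rw [Set.mem_Icc] at hτm
        have h1 : |x - x₀| ≤ δ := le_trans hxx₀ hεδ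
        have h2 : |τ * s x| ≤ δ := by
          rw [abs_mul, abs_of_nonneg hτm.1]
          calc τ * |s x| ≤ 1 * (c * M') := by
                apply mul_le_mul hτm.2 hsb (abs_nonneg _) zero_le_one
            _ = c * M' := one_mul _
            _ ≤ δ := hcM'
        have hfppb := hPδ x (τ * s x) h1 h2
        have hnn : 0 ≤ s x * s x := mul_self_nonneg _
        have hmm := mul_le_mul_of_nonneg_right (le_of_lt hfppb) hnn
        calc fpp f (x, y x, deriv y x + τ * s x) * s x * s x
            = fpp f (x, y x, deriv y x + τ * s x) * (s x * s x) := by ring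
          _ ≤ A/2 * (s x * s x) := hmm
          _ = A/2 * (s x)^2 := by ring
      have hq := quad_bound hk1 hk2 hB
      simp only [one_mul, zero_mul, add_zero, mul_zero] at hq
      rw [hwdef, hhdef]
      have e : A/2 * (s x)^2 / 2 = A/4 * (s x)^2 := by ring
      rw [e] at hq
      simp only
      linarith [hq]
    have hderu : deriv u x = w := hu_deriv x
    have hLφ : L * φ x = L*c*ε*(psib ((x - x₀)/ε)) := by rw [hφdef]; simp only; ring
    have hsx2 : A/4 * (s x)^2 = A/4*c^2*(deriv (fun t => psib t) ((x - x₀)/ε))^2 := by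
      rw [hsdef]; simp only; ring
    rw [hgdef]; simp only
    rw [hderu]
    linarith [hT1, hT2]
  -- step 7 : integral estimates
  have hψ36 : ∫ t in (-3:ℝ)..3, psib t ≤ 6 := by
    calc ∫ t in (-3:ℝ)..3, psib t ≤ ∫ t in (-3:ℝ)..3, (1:ℝ) :=
          intervalIntegral.integral_mono_on (by norm_num)
            (psi_contDiff.continuous.intervalIntegrable _ _) intervalIntegrable_const
            (fun t _ => psi_le_one t)
      _ = 6 := by simp; norm_num
  have hψ0 : 0 ≤ ∫ t in (-3:ℝ)..3, psib t :=
    intervalIntegral.integral_nonneg (by norm_num) (fun t _ => psi_nonneg t)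
  have hψ'0 : ∫ t in (-3:ℝ)..3, deriv (fun t => psib t) t = 0 := by
    rw [intervalIntegral.integral_deriv_eq_sub
      (fun t _ => (psi_contDiff.differentiable (by norm_num)) t)
      (psi_deriv_continuous.intervalIntegrable _ _)]
    rw [psi_eq_zero (by norm_num), psi_eq_zero (by norm_num), sub_zero]
  have hψ'int : ∫ x in l..r, deriv (fun t => psib t) ((x - x₀)/ε) = 0 := by
    rw [hldef, hrdef, scale_integral (fun t => deriv (fun t => psib t) t) x₀ hεpos, hψ'0,
      mul_zero]
  have hψ'2int : ∫ x in l..r, (deriv (fun t => psib t) ((x - x₀)/ε))^2 = ε * J := by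
    rw [hldef, hrdef, hJdef]
    exact scale_integral (fun t => (deriv (fun t => psib t) t)^2) x₀ hεpos
  have hcont1 : Continuous (fun x => psib ((x - x₀)/ε)) :=
    psi_contDiff.continuous.comp ((continuous_id.sub continuous_const).div_const ε)
  have hcontψ' : Continuous (fun x => deriv (fun t => psib t) ((x - x₀)/ε)) :=
    psi_deriv_continuous.comp ((continuous_id.sub continuous_const).div_const ε)
  have hB1 : ∫ x in l..r, L*c*ε*(psib ((x - x₀)/ε)) ≤ 6*L*c*ε^2 := by
    rw [intervalIntegral.integral_const_mul]
    rw [hldef, hrdef, scale_integral (fun t => psib t) x₀ hεpos]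
    have h1 : L*c*ε*(ε * ∫ t in (-3:ℝ)..3, psib t) ≤ L*c*ε*(ε*6) := by
      apply mul_le_mul_of_nonneg_left _ (by positivity)
      exact mul_le_mul_of_nonneg_left hψ36 (le_of_lt hεpos)
    calc L*c*ε*(ε * ∫ t in (-3:ℝ)..3, psib t) ≤ L*c*ε*(ε*6) := h1
      _ = 6*L*c*ε^2 := by ring
  have hsint : ∫ x in l..r, s x = 0 := by
    rw [hsdef]
    rw [intervalIntegral.integral_const_mul, hψ'int, mul_zero]
  have hB2 : ∫ x in l..r, s x * h x ≤ 6*ε*(c*M'*η) := by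
    have heq : Set.EqOn (fun x => s x * h x)
        (fun x => s x * h x₀ + s x * (h x - h x₀)) (Set.uIcc l r) := by
      intro x _; simp only; ring
    rw [intervalIntegral.integral_congr heq]
    rw [intervalIntegral.integral_add (f := fun x => s x * h x₀) (g := fun x => s x * (h x - h x₀)) ((hscont.mul continuous_const).intervalIntegrable _ _)
      ((hscont.mul (hhcont.sub continuous_const)).intervalIntegrable _ _)]
    have h1 : ∫ x in l..r, s x * h x₀ = 0 := by
      rw [intervalIntegral.integral_mul_const, hsint, zero_mul]
    have h2 : ∫ x in l..r, s x * (h x - h x₀) ≤ 6*ε*(c*M'*η) := by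
      calc ∫ x in l..r, s x * (h x - h x₀)
          ≤ |∫ x in l..r, s x * (h x - h x₀)| := le_abs_self _
        _ ≤ ∫ x in l..r, |s x * (h x - h x₀)| :=
            intervalIntegral.abs_integral_le_integral_abs hlr
        _ ≤ ∫ x in l..r, c*M'*η := by
            apply intervalIntegral.integral_mono_on (f := fun x => |s x * (h x - h x₀)|) hlr
              ((hscont.mul (hhcont.sub continuous_const)).abs.intervalIntegrable _ _)
              intervalIntegrable_const
            intro x hx
            have h3 : |s x| ≤ c*M' := hsabs x hx
            have h4 : |h x - h x₀| ≤ η := hhnear x (le_trans (habs x hx) hεδ₂)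
            rw [abs_mul]
            exact mul_le_mul h3 h4 (abs_nonneg _) (by positivity)
        _ = 6*ε*(c*M'*η) := by
            rw [intervalIntegral.integral_const, hldef, hrdef]
            rw [smul_eq_mul]
            ring
    linarith [h1, h2]
  have hB3 : ∫ x in l..r, A/4*c^2*(deriv (fun t => psib t) ((x - x₀)/ε))^2
      = A/4*c^2*(ε*J) := by
    rw [intervalIntegral.integral_const_mul, hψ'2int]
  have hbndcont : Continuous (fun x => L*c*ε*(psib ((x - x₀)/ε)) + s x * h x
      + A/4*c^2*(deriv (fun t => psib t) ((x - x₀)/ε))^2) :=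
    ((continuous_const.mul hcont1).add (hscont.mul hhcont)).add
      (continuous_const.mul (hcontψ'.pow 2))
  have htot : ∫ x in l..r, g x ≤ 6*L*c*ε^2 + 6*ε*(c*M'*η) + A/4*c^2*(ε*J) := by
    have hmono := intervalIntegral.integral_mono_on hlr (hgInt l r)
      (hbndcont.intervalIntegrable _ _) hbnd
    have hadd : ∫ x in l..r, (L*c*ε*(psib ((x - x₀)/ε)) + s x * h x
        + A/4*c^2*(deriv (fun t => psib t) ((x - x₀)/ε))^2)
        = (∫ x in l..r, L*c*ε*(psib ((x - x₀)/ε))) + (∫ x in l..r, s x * h x)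
        + ∫ x in l..r, A/4*c^2*(deriv (fun t => psib t) ((x - x₀)/ε))^2 := by
      rw [intervalIntegral.integral_add
        (f := fun x => L*c*ε*(psib ((x - x₀)/ε)) + s x * h x)
        (g := fun x => A/4*c^2*(deriv (fun t => psib t) ((x - x₀)/ε))^2)
        (((continuous_const.mul hcont1).add (hscont.mul hhcont)).intervalIntegrable _ _)
        ((continuous_const.mul (hcontψ'.pow 2)).intervalIntegrable _ _),
        intervalIntegral.integral_add
        (f := fun x => L*c*ε*(psib ((x - x₀)/ε))) (g := fun x => s x * h x)
        ((continuous_const.mul hcont1).intervalIntegrable _ _)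
        ((hscont.mul hhcont).intervalIntegrable _ _)]
    rw [hadd] at hmono
    linarith [hB1, hB2, hB3, hmono]
  -- step 8 : the contradiction
  have hP : 0 < (-A)*c^2*J*ε := mul_pos (mul_pos (mul_pos hA' (pow_pos hc0 2)) hJ) hεpos
  have hηeq : 6*ε*(c*M'*η) = (-A)*c^2*J*ε/8 := by
    rw [hηdef]; field_simp; ring
  have hB3' : A/4*c^2*(ε*J) = -((-A)*c^2*J*ε)/4 := by ring
  have hT1fin : 6*L*c*ε^2 ≤ (-A)*c^2*J*ε/16 := by
    have h6 : 0 < 6*L*c := mul_pos (mul_pos (by norm_num) hLpos) hc0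
    have hstep := mul_le_mul_of_nonneg_right
      (mul_le_mul_of_nonneg_left hεL (le_of_lt h6)) (le_of_lt hεpos)
    calc 6*L*c*ε^2 = 6*L*c*ε*ε := by ring
      _ ≤ 6*L*c*((-A)*c*J/(96*L))*ε := hstep
      _ = (-A)*c^2*J*ε*(6*L/(96*L)) := by ring
      _ = (-A)*c^2*J*ε/16 := by
          rw [show 6*L/(96*L) = 1/16 by field_simp; ring]
          ring
  have h1 : 0 ≤ ∫ x in l..r, g x := by rw [← hsplit]; exact h0g
  linarith [h1, htot, hηeq, hB3', hT1fin, hP]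
end

section
/- Among regular n-gons with a fixed perimeter L > 0, the area A(n) = (L²/(4n))·cot(π/n) is strictly increasing in n for n ≥ 3. -/
open Real

lemma xcot_strictAnti : StrictAntiOn (fun x : ℝ => x * Real.cos x / Real.sin x)
    (Set.Ioo 0 π) := by
  apply strictAntiOn_of_deriv_neg (convex_Ioo 0 π)
  · apply ContinuousOn.div
    · exact (continuous_id.mul Real.continuous_cos).continuousOn
    · exact Real.continuous_sin.continuousOn
    · intro x hx
      exact ne_of_gt (Real.sin_pos_of_pos_of_lt_pi hx.1 hx.2)
  · intro x hx
    rw [interior_Ioo] at hx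
    have hs : 0 < Real.sin x := Real.sin_pos_of_pos_of_lt_pi hx.1 hx.2
    have hd : HasDerivAt (fun x : ℝ => x * Real.cos x / Real.sin x)
        (((1 * Real.cos x + x * (-Real.sin x)) * Real.sin x -
          (x * Real.cos x) * Real.cos x) / Real.sin x ^ 2) x := by
      exact ((hasDerivAt_id x).mul (Real.hasDerivAt_cos x)).div
        (Real.hasDerivAt_sin x) (ne_of_gt hs)
    rw [hd.deriv]
    apply div_neg_of_neg_of_pos _ (by positivity)
    have h1 : Real.sin (2 * x) < 2 * x := Real.sin_lt (by linarith [hx.1])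
    rw [Real.sin_two_mul] at h1
    nlinarith [Real.sin_sq_add_cos_sq x, hx.1]

/-- Among regular n-gons of fixed perimeter L, the area (L²/(4n))·cot(π/n)
is strictly increasing in n for n ≥ 3. -/
theorem regular_polygon_area_increasing (L : ℝ) (hL : 0 < L) :
    ∀ n : ℕ, 3 ≤ n →
      L ^ 2 / (4 * n) * Real.cot (π / n) <
        L ^ 2 / (4 * (n + 1)) * Real.cot (π / (n + 1)) := by
  intro n hn
  have hn0 : (0:ℝ) < n := by exact_mod_cast (by omega : 0 < n)
  have hπ : (0:ℝ) < π := Real.pi_pos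
  have hx : π / (n + 1) ∈ Set.Ioo (0:ℝ) π := by
    constructor
    · positivity
    · rw [div_lt_iff₀ (by linarith)]
      nlinarith
  have hy : π / n ∈ Set.Ioo (0:ℝ) π := by
    constructor
    · positivity
    · rw [div_lt_iff₀ hn0]
      have : (3:ℝ) ≤ n := by exact_mod_cast hn
      nlinarith
  have hlt : π / (n + 1) < π / n := by
    apply div_lt_div_of_pos_left hπ hn0
    linarith
  have key := xcot_strictAnti hx hy hlt
  simp only [mul_div_assoc] at key
  have h1 : L ^ 2 / (4 * (n:ℝ)) = L ^ 2 / (4 * π) * (π / n) := by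
    field_simp
  have h2 : L ^ 2 / (4 * ((n:ℝ) + 1)) = L ^ 2 / (4 * π) * (π / (n + 1)) := by
    field_simp
  rw [h1, h2, Real.cot_eq_cos_div_sin, Real.cot_eq_cos_div_sin, mul_assoc, mul_assoc]
  exact mul_lt_mul_of_pos_left key (by positivity)
end
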